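/- Let G be a finite nonempty set and C a set with more elements than G. Then S* = {δ : G → C | for every g ∈ G there is h ≠ g with δ h = δ g} is the greatest colour-permutation-invariant solvable set of worlds: S* is colour-permutation-invariant and solvable, and every colour-permutation-invariant solvable S ⊆ (G → C) satisfies S ⊆ S*. (This is the greatest fixpoint interpreting Santa's announcement solvable, and it shows solvable and solvable′ have the same information content.) -/

import Mathlib

/-- Worlds `δ, δ'` are `g`-similar: they agree on all agents other than `g`. -/
def gSim {G C : Type*} (g : G) (δ δ' : G → C) : Prop := ∀ h, h ≠ g → δ h = δ' h

/-- The iterated bell dynamics: `bellSim S n g δ δ'` is the stage-`n` indistinguishability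
relation `δ ~_g^n δ'` on `S`. At stage `n+1` the relation is refined by the exact set of
knowers (the fine bell dynamics). -/
def bellSim {G C : Type*} (S : Set (G → C)) : ℕ → G → (G → C) → (G → C) → Prop
  | 0 => fun g δ δ' => δ ∈ S ∧ δ' ∈ S ∧ gSim g δ δ'
  | n + 1 => fun g δ δ' => bellSim S n g δ δ' ∧
      {x | ∀ ε, bellSim S n x δ ε → ε x = δ x} =
        {x | ∀ ε, bellSim S n x δ' ε → ε x = δ' x}

/-- The knower set `K_n(δ)`: agents who know their own colour at `δ` at stage `n`. -/
def knows {G C : Type*} (S : Set (G → C)) (n : ℕ) (δ : G → C) : Set G :=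
  {g | ∀ δ', bellSim S n g δ δ' → δ' g = δ g}

/-- `S` is invariant under permutations of the colours. -/
def permInv {G C : Type*} (S : Set (G → C)) : Prop :=
  ∀ ι : C ≃ C, ∀ δ ∈ S, (⇑ι ∘ δ) ∈ S

/-- `S` is solvable: every agent eventually knows its colour at every world of `S`. -/
def solvable {G C : Type*} (S : Set (G → C)) : Prop :=
  ∀ δ ∈ S, ∀ g : G, ∃ n : ℕ, g ∈ knows S n δ

/-- `S*`: the worlds without unique colours (every worn colour is worn at least twice). -/
def Sstar (G C : Type*) : Set (G → C) := {δ | ∀ g, ∃ h, h ≠ g ∧ δ h = δ g}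

section Aux

variable {G C : Type*}

lemma bellSim_succ (S : Set (G → C)) (n : ℕ) (g : G) (δ δ' : G → C) :
    bellSim S (n + 1) g δ δ' ↔ bellSim S n g δ δ' ∧ knows S n δ = knows S n δ' :=
  Iff.rfl

lemma bellSim_zero (S : Set (G → C)) (g : G) (δ δ' : G → C) :
    bellSim S 0 g δ δ' ↔ δ ∈ S ∧ δ' ∈ S ∧ gSim g δ δ' := Iff.rfl

lemma bellSim_le {S : Set (G → C)} {n j : ℕ} (hj : j ≤ n) {g : G} {δ δ' : G → C}
    (h : bellSim S n g δ δ') : bellSim S j g δ δ' := by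
  induction n with
  | zero => exact (Nat.le_zero.mp hj) ▸ h
  | succ n ih =>
    rcases Nat.eq_or_lt_of_le hj with rfl | hlt
    · exact h
    · exact ih (Nat.lt_succ_iff.mp hlt) h.1

lemma bellSim_base {S : Set (G → C)} {n : ℕ} {g : G} {δ δ' : G → C}
    (h : bellSim S n g δ δ') : δ ∈ S ∧ δ' ∈ S ∧ gSim g δ δ' :=
  bellSim_le (Nat.zero_le n) h

lemma bellSim_knows {S : Set (G → C)} {n j : ℕ} (hj : j < n) {g : G} {δ δ' : G → C}
    (h : bellSim S n g δ δ') : knows S j δ = knows S j δ' := by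
  induction n with
  | zero => omega
  | succ n ih =>
    rcases Nat.eq_or_lt_of_le (Nat.lt_succ_iff.mp hj) with rfl | hlt
    · exact h.2
    · exact ih hlt h.1

/-! ### Colour-permutation equivariance, for any `permInv` set -/

lemma knows_of_bell_iff {S : Set (G → C)} {ι : C ≃ C} {n : ℕ}
    (hb : ∀ (g : G) (δ δ' : G → C), bellSim S n g (⇑ι ∘ δ) (⇑ι ∘ δ') ↔ bellSim S n g δ δ')
    (δ : G → C) : knows S n (⇑ι ∘ δ) = knows S n δ := by
  ext x
  simp only [knows, Set.mem_setOf_eq]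
  constructor
  · intro H ε hε
    exact ι.injective (H (⇑ι ∘ ε) ((hb x δ ε).mpr hε))
  · intro H ε hε
    have he : ⇑ι ∘ (⇑ι.symm ∘ ε) = ε := by ext y; simp
    have h2 : bellSim S n x δ (⇑ι.symm ∘ ε) := (hb x δ _).mp (by rw [he]; exact hε)
    have h3 := H _ h2
    simp only [Function.comp_apply] at h3 ⊢
    rw [← h3]; simp

lemma bell_colour {S : Set (G → C)} (hS : permInv S) (ι : C ≃ C) :
    ∀ (n : ℕ) (g : G) (δ δ' : G → C),
      bellSim S n g (⇑ι ∘ δ) (⇑ι ∘ δ') ↔ bellSim S n g δ δ' := by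
  intro n
  induction n with
  | zero =>
    intro g δ δ'
    have hmem : ∀ ε : G → C, (⇑ι ∘ ε) ∈ S ↔ ε ∈ S := by
      intro ε
      constructor
      · intro h
        have := hS ι.symm _ h
        have he : ⇑ι.symm ∘ (⇑ι ∘ ε) = ε := by ext y; simp
        rwa [he] at this
      · exact hS ι ε
    have hg : gSim g (⇑ι ∘ δ) (⇑ι ∘ δ') ↔ gSim g δ δ' := by
      constructor
      · intro h x hx; exact ι.injective (h x hx)
      · intro h x hx
        simp only [Function.comp_apply]
        rw [h x hx]
    rw [bellSim_zero, bellSim_zero, hmem, hmem, hg]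
  | succ n ih =>
    intro g δ δ'
    rw [bellSim_succ, bellSim_succ, ih, knows_of_bell_iff ih, knows_of_bell_iff ih]

lemma knows_colour {S : Set (G → C)} (hS : permInv S) (ι : C ≃ C) (n : ℕ) (δ : G → C) :
    knows S n (⇑ι ∘ δ) = knows S n δ :=
  knows_of_bell_iff (bell_colour hS ι n) δ

/-! ### Agent-permutation equivariance, for `S*` -/

lemma Sstar_perm {δ : G → C} (π : G ≃ G) (h : δ ∈ Sstar G C) : δ ∘ ⇑π ∈ Sstar G C := by
  intro g
  obtain ⟨h', hne, heq⟩ := h (π g)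
  refine ⟨π.symm h', fun e => hne ?_, ?_⟩
  · rw [← e]; simp
  · simpa using heq

lemma Sstar_perm_iff (π : G ≃ G) {δ : G → C} : δ ∘ ⇑π ∈ Sstar G C ↔ δ ∈ Sstar G C := by
  constructor
  · intro h
    have := Sstar_perm π.symm h
    have he : (δ ∘ ⇑π) ∘ ⇑π.symm = δ := by ext y; simp
    rwa [he] at this
  · exact Sstar_perm π

lemma knows_of_bell_agent {n : ℕ} {π : G ≃ G}
    (hb : ∀ (g : G) (δ δ' : G → C),
      bellSim (Sstar G C) n g (δ ∘ ⇑π) (δ' ∘ ⇑π) ↔ bellSim (Sstar G C) n (π g) δ δ')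
    (δ : G → C) : knows (Sstar G C) n (δ ∘ ⇑π) = ⇑π ⁻¹' knows (Sstar G C) n δ := by
  ext x
  simp only [knows, Set.mem_setOf_eq, Set.mem_preimage]
  constructor
  · intro H ε hε
    have h2 := H (ε ∘ ⇑π) ((hb x δ ε).mpr hε)
    exact h2
  · intro H ε hε
    have he : (ε ∘ ⇑π.symm) ∘ ⇑π = ε := by ext y; simp
    have h2 : bellSim (Sstar G C) n (π x) δ (ε ∘ ⇑π.symm) :=
      (hb x δ _).mp (by rw [he]; exact hε)
    have h3 := H _ h2
    simpa using h3

lemma bell_agent (π : G ≃ G) :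
    ∀ (n : ℕ) (g : G) (δ δ' : G → C),
      bellSim (Sstar G C) n g (δ ∘ ⇑π) (δ' ∘ ⇑π) ↔ bellSim (Sstar G C) n (π g) δ δ' := by
  intro n
  induction n with
  | zero =>
    intro g δ δ'
    have hg : gSim g (δ ∘ ⇑π) (δ' ∘ ⇑π) ↔ gSim (π g) δ δ' := by
      constructor
      · intro h x hx
        have := h (π.symm x) (fun e => hx (by rw [← e]; simp))
        simpa using this
      · intro h x hx
        exact h (π x) (fun e => hx (π.injective e))
    rw [bellSim_zero, bellSim_zero, Sstar_perm_iff, Sstar_perm_iff, hg]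
  | succ n ih =>
    intro g δ δ'
    rw [bellSim_succ, bellSim_succ, ih, knows_of_bell_agent ih, knows_of_bell_agent ih,
      Set.preimage_eq_preimage π.surjective]

/-! ### Solvability of `S*` -/

lemma sstar_main [Fintype G] :
    ∀ (m : ℕ) (δ : G → C), δ ∈ Sstar G C → ∀ g : G, Set.ncard {h | δ h = δ g} = m →
      ∀ δ', bellSim (Sstar G C) (m - 2) g δ δ' → δ' g = δ g := by
  intro m
  induction m using Nat.strong_induction_on with
  | _ m IH =>
  intro δ hδ g hm δ' hb
  classical
  by_contra hne
  obtain ⟨hδS, hδ'S, hsim⟩ := bellSim_base hb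
  obtain ⟨h, hhg, hha⟩ := hδ g
  have hfin : {x | δ x = δ g}.Finite := Set.toFinite _
  -- From `δ' ∈ S*` at `h` we get a third wearer of the colour `δ g` in `δ`.
  have hm3 : 3 ≤ m := by
    obtain ⟨h', hh'h, hh'e⟩ := hδ'S h
    have hδ'h : δ' h = δ g := by rw [← hsim h hhg]; exact hha
    have hh'g : h' ≠ g := by
      intro e
      subst e
      exact hne (by rw [hh'e, hδ'h])
    have hδh' : δ h' = δ g := by rw [hsim h' hh'g, hh'e, hδ'h]
    have hsub : ({g, h, h'} : Set G) ⊆ {x | δ x = δ g} := by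
      intro x hx
      rcases hx with rfl | rfl | rfl
      · rfl
      · exact hha
      · exact hδh'
    have hcard : ({g, h, h'} : Set G).ncard = 3 := by
      rw [Set.ncard_insert_of_notMem (by simp [hhg.symm, hh'g.symm]) (Set.toFinite _),
        Set.ncard_insert_of_notMem (by simp [hh'h.symm]) (Set.toFinite _),
        Set.ncard_singleton]
    calc 3 = ({g, h, h'} : Set G).ncard := hcard.symm
    _ ≤ ({x | δ x = δ g} : Set G).ncard := Set.ncard_le_ncard hsub hfin
    _ = m := hm
  -- unfold one step of `bellSim`
  have hm2 : m - 2 = (m - 3) + 1 := by omega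
  rw [hm2, bellSim_succ] at hb
  obtain ⟨hb0, hK⟩ := hb
  -- the multiplicity of `h`'s colour in `δ'` is `m - 1`
  have hδ'h : δ' h = δ g := by rw [← hsim h hhg]; exact hha
  have hsets : {x | δ' x = δ' h} = {x | δ x = δ g} \ {g} := by
    ext x
    simp only [Set.mem_setOf_eq, Set.mem_diff, Set.mem_singleton_iff, hδ'h]
    constructor
    · intro hx
      have hxg : x ≠ g := by
        intro e; subst e; exact hne hx
      exact ⟨by rw [hsim x hxg]; exact hx, hxg⟩
    · intro ⟨hx, hxg⟩
      rw [← hsim x hxg]; exact hx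
  have hml : Set.ncard {x | δ' x = δ' h} = m - 1 := by
    rw [hsets, Set.ncard_diff_singleton_of_mem (show g ∈ {x | δ x = δ g} from rfl), hm]
  -- IH applied to `h` in `δ'`
  have hKh' : h ∈ knows (Sstar G C) (m - 3) δ' := by
    intro ε hε
    have := IH (m - 1) (by omega) δ' hδ'S h hml
    rw [show m - 1 - 2 = m - 3 by omega] at this
    exact this ε hε
  have hKh : h ∈ knows (Sstar G C) (m - 3) δ := by rw [hK]; exact hKh'
  -- the swapped world
  set π := Equiv.swap g h with hπ
  have hδπ : δ ∘ ⇑π = δ := by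
    ext x
    rcases eq_or_ne x g with rfl | hxg
    · simp [hπ, hha]
    rcases eq_or_ne x h with rfl | hxh
    · simp [hπ, hha]
    · simp [hπ, Equiv.swap_apply_of_ne_of_ne hxg hxh]
  set ε := δ' ∘ ⇑π with hε
  have hεS : ε ∈ Sstar G C := Sstar_perm π hδ'S
  have hεh : ε h = δ' g := by simp [hε, hπ]
  have key : ∀ j, j ≤ m - 3 → bellSim (Sstar G C) j h δ ε := by
    intro j
    induction j with
    | zero =>
      intro _
      refine ⟨hδS, hεS, ?_⟩
      intro x hxh
      rcases eq_or_ne x g with hxg | hxg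
      · subst hxg
        rw [show ε x = δ' h from by simp [hε, hπ], hδ'h]
      · rw [show ε x = δ' x from by simp [hε, hπ, Equiv.swap_apply_of_ne_of_ne hxg hxh],
          ← hsim x hxg]
    | succ j ihj =>
      intro hj
      refine ⟨ihj (by omega), ?_⟩
      have e1 : knows (Sstar G C) j ε = ⇑π ⁻¹' knows (Sstar G C) j δ' :=
        knows_of_bell_agent (bell_agent π j) δ'
      have e2 : knows (Sstar G C) j δ' = knows (Sstar G C) j δ :=
        (bellSim_knows (by omega) hb0).symm
      have e3 : ⇑π ⁻¹' knows (Sstar G C) j δ = knows (Sstar G C) j (δ ∘ ⇑π) :=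
        (knows_of_bell_agent (bell_agent π j) δ).symm
      show knows (Sstar G C) j δ = knows (Sstar G C) j ε
      rw [e1, e2, e3, hδπ]
  have hfinal := hKh ε (key (m - 3) le_rfl)
  -- hfinal : ε h = δ h, but ε h = δ' g and δ h = δ g
  exact hne (by rw [← hεh, hfinal, hha])

end Aux

/-- `S*` is the greatest colour-permutation-invariant solvable set of worlds. -/
theorem stmt_5 {G C : Type*} [Fintype G] [Nonempty G]
    (hcard : (Fintype.card G : Cardinal) < Cardinal.mk C) :
    permInv (Sstar G C) ∧ solvable (Sstar G C) ∧
      ∀ S : Set (G → C), permInv S → solvable S → S ⊆ Sstar G C := by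
  refine ⟨?_, ?_, ?_⟩
  · intro ι δ hδ g
    obtain ⟨h, hne, he⟩ := hδ g
    exact ⟨h, hne, by simp [he]⟩
  · intro δ hδ g
    exact ⟨Set.ncard {h | δ h = δ g} - 2, fun δ' hb => sstar_main _ δ hδ g rfl δ' hb⟩
  · intro S hperm hsol δ hδ
    classical
    by_contra hg
    simp only [Sstar, Set.mem_setOf_eq] at hg
    push_neg at hg
    obtain ⟨g, hg⟩ := hg
    have hnsurj : ¬ Function.Surjective δ := by
      intro hs
      have hfC : Finite C := Finite.of_surjective δ hs
      have : Fintype C := Fintype.ofFinite C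
      rw [Cardinal.mk_fintype, Nat.cast_lt] at hcard
      exact absurd (Fintype.card_le_of_surjective δ hs) (not_le.mpr hcard)
    simp only [Function.Surjective, not_forall] at hnsurj
    obtain ⟨c, hc⟩ := hnsurj
    push_neg at hc
    set ι := Equiv.swap (δ g) c with hι
    set δ'' := ⇑ι ∘ δ with hδ''
    have hmem : δ'' ∈ S := hperm ι δ hδ
    have hfix : ∀ h, h ≠ g → δ'' h = δ h := by
      intro h hh
      have h1 : δ h ≠ δ g := hg h hh
      have h2 : δ h ≠ c := fun e => (hc h) e
      simp [hδ'', hι, Equiv.swap_apply_of_ne_of_ne h1 h2]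
    have hgc : δ'' g = c := by simp [hδ'', hι]
    have hcg : c ≠ δ g := fun e => hc g e.symm
    obtain ⟨n, hn⟩ := hsol δ hδ g
    have hbell : ∀ n, bellSim S n g δ δ'' := by
      intro n
      induction n with
      | zero => exact ⟨hδ, hmem, fun h hh => (hfix h hh).symm⟩
      | succ n ih =>
        exact ⟨ih, (knows_colour hperm ι n δ).symm⟩
    have := hn δ'' (hbell n)
    rw [hgc] at this
    exact hcg this
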